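/- For all complex q with |q| < 1, (-q;q)_∞ = ∑_{m=0}^{∞} ((-q;q)_m/(q;q)_m) q^{m(3m+1)/2} (1 + q^{2m+1}). -/

import Mathlib

open Finset Filter Topology

namespace SylvesterAux

noncomputable section

def e (m : ℕ) : ℕ := m * (3 * m + 1) / 2

def c (q z : ℂ) (m : ℕ) : ℂ :=
  ((∏ i ∈ range m, (1 + z * q ^ (i + 1))) / (∏ i ∈ range m, (1 - q ^ (i + 1)))) *
    z ^ m * q ^ e m * (1 + z * q ^ (2 * m + 1))

def H (q z : ℂ) (m : ℕ) : ℂ :=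
  ((∏ i ∈ range m, (1 + z * q ^ (i + 1))) / (∏ i ∈ range m, (1 - q ^ (i + 1)))) *
    (1 - q ^ m) * z ^ m * q ^ e m

lemma e_succ (m : ℕ) : e (m + 1) = e m + (3 * m + 2) := by
  have h : (m + 1) * (3 * (m + 1) + 1) = m * (3 * m + 1) + (3 * m + 2) * 2 := by ring
  rw [e, e, h, Nat.add_mul_div_right _ _ (by norm_num : (0:ℕ) < 2)]

lemma m_le_e (m : ℕ) : m ≤ e m := by
  rw [e, Nat.le_div_iff_mul_le (by norm_num)]
  cases m with
  | zero => simp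
  | succ n => exact Nat.mul_le_mul_left (n + 1) (by omega)

lemma one_sub_pow_ne {q : ℂ} (hq : ‖q‖ < 1) (k : ℕ) : (1 : ℂ) - q ^ (k + 1) ≠ 0 := by
  intro h
  have h1 : q ^ (k + 1) = 1 := by linear_combination -h
  have h2 : ‖q ^ (k + 1)‖ < 1 := by
    rw [norm_pow]
    exact pow_lt_one₀ (norm_nonneg q) hq (Nat.succ_ne_zero k)
  rw [h1, norm_one] at h2
  exact lt_irrefl _ h2

lemma key {q : ℂ} (hq : ‖q‖ < 1) (z : ℂ) (m : ℕ) :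
    c q z m - (1 + z * q) * c q (z * q) m = H q z m - H q z (m + 1) := by
  have hb : (∏ i ∈ range m, (1 - q ^ (i + 1))) ≠ 0 :=
    Finset.prod_ne_zero_iff.mpr fun i _ => one_sub_pow_ne hq i
  have hb1 : (1 : ℂ) - q ^ (m + 1) ≠ 0 := one_sub_pow_ne hq m
  have hp : (1 + z * q) * ∏ i ∈ range m, (1 + z * q * q ^ (i + 1))
      = (∏ i ∈ range m, (1 + z * q ^ (i + 1))) * (1 + z * q ^ (m + 1)) := by
    have h1 : ∏ i ∈ range m, (1 + z * q * q ^ (i + 1))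
        = ∏ i ∈ range m, (1 + z * q ^ (i + 1 + 1)) := by
      refine Finset.prod_congr rfl fun i _ => ?_
      ring
    calc (1 + z * q) * ∏ i ∈ range m, (1 + z * q * q ^ (i + 1))
        = (∏ i ∈ range m, (1 + z * q ^ (i + 1 + 1))) * (1 + z * q ^ (0 + 1)) := by
          rw [h1]; ring
      _ = ∏ i ∈ range (m + 1), (1 + z * q ^ (i + 1)) :=
          (Finset.prod_range_succ' (fun i => (1 + z * q ^ (i + 1))) m).symm
      _ = (∏ i ∈ range m, (1 + z * q ^ (i + 1))) * (1 + z * q ^ (m + 1)) :=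
          Finset.prod_range_succ _ m
  have hc2 : (1 + z * q) * c q (z * q) m
      = ((∏ i ∈ range m, (1 + z * q ^ (i + 1))) * (1 + z * q ^ (m + 1)) /
          (∏ i ∈ range m, (1 - q ^ (i + 1)))) *
        ((z * q) ^ m * q ^ e m * (1 + z * q * q ^ (2 * m + 1))) := by
    rw [c]
    field_simp
    linear_combination ((z * q) ^ m * q ^ e m * (1 + z * q * q ^ (2 * m + 1))) * hp
  rw [c, H, H, hc2, e_succ, pow_add, Finset.prod_range_succ, Finset.prod_range_succ]
  field_simp
  ring

section Bounds

variable {q : ℂ}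

def K (q : ℂ) : ℝ := Real.exp (2 * ‖q‖ / ((1 - ‖q‖) * (1 - ‖q‖)))

lemma sum_pow_le (hq : ‖q‖ < 1) (m : ℕ) :
    ∑ i ∈ range m, ‖q‖ ^ (i + 1) ≤ ‖q‖ / (1 - ‖q‖) := by
  have h0 : 0 ≤ ‖q‖ := norm_nonneg q
  have h2 : ∑ i ∈ range m, ‖q‖ ^ (i + 1) = ‖q‖ * ∑ i ∈ range m, ‖q‖ ^ i := by
    rw [Finset.mul_sum]
    exact Finset.sum_congr rfl fun i _ => pow_succ' _ _
  rw [h2, div_eq_mul_inv]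
  refine mul_le_mul_of_nonneg_left ?_ h0
  calc ∑ i ∈ range m, ‖q‖ ^ i ≤ ∑' i : ℕ, ‖q‖ ^ i :=
        Summable.sum_le_tsum _ (fun i _ => pow_nonneg h0 i) (summable_geometric_of_lt_one h0 hq)
    _ = (1 - ‖q‖)⁻¹ := tsum_geometric_of_lt_one h0 hq

lemma factor_bound (hq : ‖q‖ < 1) {z : ℂ} (hz : ‖z‖ ≤ 1) (i : ℕ) :
    ‖(1 + z * q ^ (i + 1)) / (1 - q ^ (i + 1))‖ ≤
      Real.exp (2 * ‖q‖ ^ (i + 1) / (1 - ‖q‖)) := by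
  have h0 : 0 ≤ ‖q‖ := norm_nonneg q
  set x := ‖q‖ ^ (i + 1) with hxdef
  have hx0 : 0 ≤ x := pow_nonneg h0 _
  have hxq : x ≤ ‖q‖ := by
    calc x ≤ ‖q‖ ^ 1 := pow_le_pow_of_le_one h0 hq.le (by omega)
    _ = ‖q‖ := pow_one _
  have hx1 : x < 1 := lt_of_le_of_lt hxq hq
  have hq1 : (0:ℝ) < 1 - ‖q‖ := by linarith
  have hdpos : (0:ℝ) < 1 - x := by linarith
  have hnum : ‖(1 : ℂ) + z * q ^ (i + 1)‖ ≤ 1 + x := by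
    calc ‖(1:ℂ) + z * q ^ (i + 1)‖ ≤ ‖(1:ℂ)‖ + ‖z * q ^ (i + 1)‖ := norm_add_le _ _
    _ = 1 + ‖z‖ * ‖q‖ ^ (i + 1) := by rw [norm_one, norm_mul, norm_pow]
    _ ≤ 1 + 1 * x := by nlinarith [norm_nonneg z]
    _ = 1 + x := by ring
  have hden : 1 - x ≤ ‖(1:ℂ) - q ^ (i + 1)‖ := by
    calc 1 - x = ‖(1:ℂ)‖ - ‖q ^ (i + 1)‖ := by rw [norm_one, norm_pow]
    _ ≤ ‖(1:ℂ) - q ^ (i + 1)‖ := norm_sub_norm_le _ _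
  rw [norm_div]
  have step1 : ‖(1:ℂ) + z * q ^ (i + 1)‖ / ‖(1:ℂ) - q ^ (i + 1)‖ ≤ (1 + x) / (1 - x) :=
    div_le_div₀ (by linarith) hnum hdpos hden
  refine step1.trans ?_
  have step2 : (1 + x) / (1 - x) ≤ 1 + 2 * x / (1 - ‖q‖) := by
    rw [div_le_iff₀ hdpos]
    have expand : ∀ r y : ℝ, 0 < 1 - r →
        (1 + 2 * y / (1 - r)) * (1 - y) - (1 + y) = 2 * y * (r - y) / (1 - r) := by
      intro r y hr
      field_simp
      ring
    have expand := expand (‖q‖) x hq1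
    have hnn : 0 ≤ 2 * x * (‖q‖ - x) / (1 - ‖q‖) :=
      div_nonneg (by nlinarith) hq1.le
    linarith
  refine step2.trans ?_
  have h3 := Real.add_one_le_exp (2 * x / (1 - ‖q‖))
  linarith

lemma ratio_bound (hq : ‖q‖ < 1) {z : ℂ} (hz : ‖z‖ ≤ 1) (m : ℕ) :
    ‖(∏ i ∈ range m, (1 + z * q ^ (i + 1))) / (∏ i ∈ range m, (1 - q ^ (i + 1)))‖ ≤ K q := by
  have h0 : 0 ≤ ‖q‖ := norm_nonneg q
  have hq1 : (0:ℝ) < 1 - ‖q‖ := by linarith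
  rw [← Finset.prod_div_distrib, norm_prod]
  calc ∏ i ∈ range m, ‖(1 + z * q ^ (i + 1)) / (1 - q ^ (i + 1))‖
      ≤ ∏ i ∈ range m, Real.exp (2 * ‖q‖ ^ (i + 1) / (1 - ‖q‖)) :=
        Finset.prod_le_prod (fun i _ => norm_nonneg _) (fun i _ => factor_bound hq hz i)
    _ = Real.exp (∑ i ∈ range m, 2 * ‖q‖ ^ (i + 1) / (1 - ‖q‖)) := (Real.exp_sum _ _).symm
    _ ≤ K q := by
        rw [K, Real.exp_le_exp]
        have h4 : ∑ i ∈ range m, 2 * ‖q‖ ^ (i + 1) / (1 - ‖q‖)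
            = (2 / (1 - ‖q‖)) * ∑ i ∈ range m, ‖q‖ ^ (i + 1) := by
          rw [Finset.mul_sum]; exact Finset.sum_congr rfl fun i _ => by ring
        rw [h4]
        have h5 := sum_pow_le hq m
        calc (2 / (1 - ‖q‖)) * ∑ i ∈ range m, ‖q‖ ^ (i + 1)
            ≤ (2 / (1 - ‖q‖)) * (‖q‖ / (1 - ‖q‖)) := by
              refine mul_le_mul_of_nonneg_left h5 (by positivity)
          _ = 2 * ‖q‖ / ((1 - ‖q‖) * (1 - ‖q‖)) := by field_simp

lemma c_bound (hq : ‖q‖ < 1) {z : ℂ} (hz : ‖z‖ ≤ 1) (m : ℕ) :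
    ‖c q z m‖ ≤ 2 * K q * (‖z‖ ^ m * ‖q‖ ^ m) := by
  have h0 : 0 ≤ ‖q‖ := norm_nonneg q
  have hK : 0 < K q := Real.exp_pos _
  rw [c, norm_mul, norm_mul, norm_mul, norm_pow, norm_pow]
  have h1 := ratio_bound hq hz m
  have h2 : ‖q‖ ^ e m ≤ ‖q‖ ^ m := pow_le_pow_of_le_one h0 hq.le (m_le_e m)
  have h3 : ‖(1:ℂ) + z * q ^ (2 * m + 1)‖ ≤ 2 := by
    calc ‖(1:ℂ) + z * q ^ (2 * m + 1)‖ ≤ ‖(1:ℂ)‖ + ‖z * q ^ (2 * m + 1)‖ := norm_add_le _ _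
    _ = 1 + ‖z‖ * ‖q‖ ^ (2 * m + 1) := by rw [norm_one, norm_mul, norm_pow]
    _ ≤ 2 := by nlinarith [norm_nonneg z, pow_nonneg h0 (2 * m + 1),
          pow_le_one₀ h0 hq.le (n := 2 * m + 1), pow_nonneg (norm_nonneg z) m]
  calc ‖(∏ i ∈ range m, (1 + z * q ^ (i + 1))) / (∏ i ∈ range m, (1 - q ^ (i + 1)))‖ *
        ‖z‖ ^ m * ‖q‖ ^ e m * ‖(1:ℂ) + z * q ^ (2 * m + 1)‖
      ≤ K q * ‖z‖ ^ m * ‖q‖ ^ m * 2 := by gcongr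
    _ = 2 * K q * (‖z‖ ^ m * ‖q‖ ^ m) := by ring

lemma summable_norm_c (hq : ‖q‖ < 1) {z : ℂ} (hz : ‖z‖ ≤ 1) :
    Summable (fun m => ‖c q z m‖) := by
  have h0 : 0 ≤ ‖q‖ := norm_nonneg q
  have hK : 0 < K q := Real.exp_pos _
  refine Summable.of_nonneg_of_le (fun m => norm_nonneg _) (fun m => ?_)
    ((summable_geometric_of_lt_one h0 hq).mul_left (2 * K q))
  calc ‖c q z m‖ ≤ 2 * K q * (‖z‖ ^ m * ‖q‖ ^ m) := c_bound hq hz m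
    _ ≤ 2 * K q * (1 * ‖q‖ ^ m) := by
        have hp : ‖z‖ ^ m ≤ 1 := pow_le_one₀ (norm_nonneg z) hz
        gcongr
    _ = 2 * K q * ‖q‖ ^ m := by ring

lemma summable_c (hq : ‖q‖ < 1) {z : ℂ} (hz : ‖z‖ ≤ 1) : Summable (c q z) :=
  (summable_norm_c hq hz).of_norm

lemma H_bound (hq : ‖q‖ < 1) {z : ℂ} (hz : ‖z‖ ≤ 1) (m : ℕ) :
    ‖H q z m‖ ≤ 2 * K q * ‖q‖ ^ m := by
  have h0 : 0 ≤ ‖q‖ := norm_nonneg q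
  have hK : 0 < K q := Real.exp_pos _
  rw [H, norm_mul, norm_mul, norm_mul, norm_pow, norm_pow]
  have h1 := ratio_bound hq hz m
  have h2 : ‖q‖ ^ e m ≤ ‖q‖ ^ m := pow_le_pow_of_le_one h0 hq.le (m_le_e m)
  have h3 : ‖(1:ℂ) - q ^ m‖ ≤ 2 := by
    calc ‖(1:ℂ) - q ^ m‖ ≤ ‖(1:ℂ)‖ + ‖q ^ m‖ := norm_sub_le _ _
    _ = 1 + ‖q‖ ^ m := by rw [norm_one, norm_pow]
    _ ≤ 2 := by nlinarith [pow_le_one₀ h0 hq.le (n := m)]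
  have h4 : ‖z‖ ^ m ≤ 1 := pow_le_one₀ (norm_nonneg z) hz
  calc ‖(∏ i ∈ range m, (1 + z * q ^ (i + 1))) / (∏ i ∈ range m, (1 - q ^ (i + 1)))‖ *
        ‖(1:ℂ) - q ^ m‖ * ‖z‖ ^ m * ‖q‖ ^ e m
      ≤ K q * 2 * 1 * ‖q‖ ^ m := by gcongr
    _ = 2 * K q * ‖q‖ ^ m := by ring

lemma H_tendsto (hq : ‖q‖ < 1) {z : ℂ} (hz : ‖z‖ ≤ 1) :
    Tendsto (H q z) atTop (𝓝 0) := by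
  refine squeeze_zero_norm (H_bound hq hz) ?_
  have := (tendsto_pow_atTop_nhds_zero_of_lt_one (norm_nonneg q) hq).const_mul (2 * K q)
  simpa using this

lemma feq (hq : ‖q‖ < 1) {z : ℂ} (hz : ‖z‖ ≤ 1) :
    (∑' m, c q z m) = (1 + z * q) * ∑' m, c q (z * q) m := by
  have hz2 : ‖z * q‖ ≤ 1 := by
    rw [norm_mul]
    nlinarith [norm_nonneg z, norm_nonneg q]
  have h1 := summable_c hq hz
  have h2 := summable_c hq hz2
  have h3 : Summable (fun m => c q z m - (1 + z * q) * c q (z * q) m) :=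
    h1.sub (h2.mul_left _)
  have h4 : HasSum (fun m => c q z m - (1 + z * q) * c q (z * q) m) 0 := by
    rw [h3.hasSum_iff_tendsto_nat]
    have h5 : ∀ N, ∑ m ∈ range N, (c q z m - (1 + z * q) * c q (z * q) m)
        = H q z 0 - H q z N := by
      intro N
      rw [← Finset.sum_range_sub' (H q z) N]
      exact Finset.sum_congr rfl fun m _ => key hq z m
    simp only [h5]
    have h0 : H q z 0 = 0 := by simp [H]
    rw [h0]
    simpa using (H_tendsto hq hz).neg
  have h6 : (∑' m, (c q z m - (1 + z * q) * c q (z * q) m)) = 0 := h4.tsum_eq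
  rw [Summable.tsum_sub h1 (h2.mul_left _), tsum_mul_left] at h6
  exact sub_eq_zero.mp h6

lemma iter (hq : ‖q‖ < 1) (N : ℕ) :
    (∑' m, c q 1 m) = (∏ i ∈ range N, (1 + q ^ (i + 1))) * ∑' m, c q (q ^ N) m := by
  induction N with
  | zero => simp
  | succ n ih =>
    have hzn : ‖(q : ℂ) ^ n‖ ≤ 1 := by
      rw [norm_pow]; exact pow_le_one₀ (norm_nonneg q) hq.le
    rw [ih, feq hq hzn, Finset.prod_range_succ, ← pow_succ]
    ring

lemma multipliable_aux (hq : ‖q‖ < 1) : Multipliable (fun i : ℕ => 1 + q ^ (i + 1)) := by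
  have h0 : 0 ≤ ‖q‖ := norm_nonneg q
  refine (fun (_ : ∀ (_ : Unit) (n : ℕ), 1 + q ^ (n + 1) ≠ 0)
      (hs : ∀ _ : Unit, Summable fun n : ℕ => Complex.log (1 + q ^ (n + 1))) =>
        Complex.multipliable_of_summable_log (hs ())) ?_ ?_
  · intro _ n h
    have h1 : q ^ (n + 1) = -1 := by linear_combination h
    have h2 : ‖q ^ (n + 1)‖ < 1 := by
      rw [norm_pow]; exact pow_lt_one₀ h0 hq (Nat.succ_ne_zero n)
    rw [h1] at h2
    simp at h2
  · intro _
    apply Summable.of_norm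
    refine Summable.of_nonneg_of_le (fun n => norm_nonneg _) (fun n => ?_)
      ((summable_geometric_of_lt_one h0 hq).mul_left (((1 - ‖q‖)⁻¹ / 2 + 1) * ‖q‖))
    have hx1 : ‖q ^ (n + 1)‖ < 1 := by
      rw [norm_pow]; exact pow_lt_one₀ h0 hq (Nat.succ_ne_zero n)
    have hb := Complex.norm_log_one_add_le hx1
    rw [norm_pow] at hb
    set x := ‖q‖ ^ (n + 1) with hxdef
    have hx0 : 0 ≤ x := pow_nonneg h0 _
    have hxq : x ≤ ‖q‖ := by
      calc x ≤ ‖q‖ ^ 1 := pow_le_pow_of_le_one h0 hq.le (by omega)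
      _ = ‖q‖ := pow_one _
    have hxlt : x < 1 := lt_of_le_of_lt hxq hq
    have hq1 : (0:ℝ) < 1 - ‖q‖ := by linarith
    have hinv : (1 - x)⁻¹ ≤ (1 - ‖q‖)⁻¹ := by
      apply inv_anti₀ hq1
      linarith
    have hxx : x ^ 2 ≤ x := by nlinarith
    have hform : ((1 - ‖q‖)⁻¹ / 2 + 1) * ‖q‖ * ‖q‖ ^ n = ((1 - ‖q‖)⁻¹ / 2 + 1) * x := by
      rw [hxdef]; ring
    rw [hform]
    have hinv0 : (0:ℝ) ≤ (1 - ‖q‖)⁻¹ := by positivity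
    calc ‖Complex.log (1 + q ^ (n + 1))‖ ≤ x ^ 2 * (1 - x)⁻¹ / 2 + x := hb
      _ ≤ x * (1 - ‖q‖)⁻¹ / 2 + x := by
          have hxd : (0:ℝ) < 1 - x := by linarith
          have hinvx0 : (0:ℝ) ≤ (1 - x)⁻¹ := (inv_pos.mpr hxd).le
          have : x ^ 2 * (1 - x)⁻¹ ≤ x * (1 - ‖q‖)⁻¹ :=
            mul_le_mul hxx hinv hinvx0 hx0
          linarith
      _ = ((1 - ‖q‖)⁻¹ / 2 + 1) * x := by ring

lemma c_zero (q z : ℂ) : c q z 0 = 1 + z * q := by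
  simp [c, e]

lemma tsum_sub_one_bound (hq : ‖q‖ < 1) {z : ℂ} (hz : ‖z‖ ≤ 1) :
    ‖(∑' m, c q z m) - 1‖ ≤ (‖q‖ + 2 * K q * (‖q‖ * (1 - ‖q‖)⁻¹)) * ‖z‖ := by
  have h0 : 0 ≤ ‖q‖ := norm_nonneg q
  have hK : 0 < K q := Real.exp_pos _
  have hsum := summable_c hq hz
  have hnorm := summable_norm_c hq hz
  have hnorm1 : Summable (fun m => ‖c q z (m + 1)‖) :=
    (summable_nat_add_iff 1).mpr hnorm
  have hgeom : Summable (fun m : ℕ => 2 * K q * ‖z‖ * ‖q‖ ^ (m + 1)) := by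
    have : Summable (fun m : ℕ => (2 * K q * ‖z‖ * ‖q‖) * ‖q‖ ^ m) :=
      (summable_geometric_of_lt_one h0 hq).mul_left _
    refine this.congr fun m => by ring
  rw [Summable.tsum_eq_zero_add hsum, c_zero]
  have hre : (1 + z * q + ∑' m, c q z (m + 1)) - 1 = z * q + ∑' m, c q z (m + 1) := by ring
  rw [hre]
  calc ‖z * q + ∑' m, c q z (m + 1)‖
      ≤ ‖z * q‖ + ‖∑' m, c q z (m + 1)‖ := norm_add_le _ _
    _ ≤ ‖z‖ * ‖q‖ + ∑' m, ‖c q z (m + 1)‖ := by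
        rw [norm_mul]
        exact add_le_add_right (norm_tsum_le_tsum_norm hnorm1) _
    _ ≤ ‖z‖ * ‖q‖ + ∑' m : ℕ, 2 * K q * ‖z‖ * ‖q‖ ^ (m + 1) := by
        refine add_le_add_right (Summable.tsum_le_tsum (fun m => ?_) hnorm1 hgeom) _
        calc ‖c q z (m + 1)‖ ≤ 2 * K q * (‖z‖ ^ (m + 1) * ‖q‖ ^ (m + 1)) := c_bound hq hz _
          _ ≤ 2 * K q * (‖z‖ * ‖q‖ ^ (m + 1)) := by
              have hzz : ‖z‖ ^ (m + 1) ≤ ‖z‖ := pow_le_of_le_one (norm_nonneg z) hz (by omega)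
              gcongr
          _ = 2 * K q * ‖z‖ * ‖q‖ ^ (m + 1) := by ring
    _ = ‖z‖ * ‖q‖ + 2 * K q * ‖z‖ * (‖q‖ * (1 - ‖q‖)⁻¹) := by
        congr 1
        rw [tsum_mul_left]
        congr 1
        calc ∑' m : ℕ, ‖q‖ ^ (m + 1) = ∑' m : ℕ, ‖q‖ * ‖q‖ ^ m := by
              refine tsum_congr fun m => pow_succ' _ _
          _ = ‖q‖ * ∑' m : ℕ, ‖q‖ ^ m := tsum_mul_left
          _ = ‖q‖ * (1 - ‖q‖)⁻¹ := by rw [tsum_geometric_of_lt_one h0 hq]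
    _ = (‖q‖ + 2 * K q * (‖q‖ * (1 - ‖q‖)⁻¹)) * ‖z‖ := by ring

lemma tendsto_F (hq : ‖q‖ < 1) :
    Tendsto (fun N => ∑' m, c q (q ^ N) m) atTop (𝓝 1) := by
  have h0 : 0 ≤ ‖q‖ := norm_nonneg q
  have h2 : Tendsto (fun N => (∑' m, c q (q ^ N) m) - 1) atTop (𝓝 0) := by
    refine squeeze_zero_norm
      (a := fun N => (‖q‖ + 2 * K q * (‖q‖ * (1 - ‖q‖)⁻¹)) * ‖q‖ ^ N) (fun N => ?_) ?_
    · have hzn : ‖(q : ℂ) ^ N‖ ≤ 1 := by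
        rw [norm_pow]; exact pow_le_one₀ h0 hq.le
      have hb := tsum_sub_one_bound hq hzn
      rw [norm_pow] at hb
      exact hb
    · have := (tendsto_pow_atTop_nhds_zero_of_lt_one h0 hq).const_mul
        (‖q‖ + 2 * K q * (‖q‖ * (1 - ‖q‖)⁻¹))
      simpa using this
  have h3 := h2.add (tendsto_const_nhds (x := (1:ℂ)))
  simp only [sub_add_cancel, zero_add] at h3
  exact h3

end Bounds

end

end SylvesterAux

/-- The `z = 1` case of Sylvester's identity: for `|q| < 1`,
`(-q;q)_∞ = ∑_{m=0}^∞ ((-q;q)_m/(q;q)_m) q^{m(3m+1)/2} (1 + q^{2m+1})`. -/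
theorem sylvester_z_eq_one (q : ℂ) (hq : ‖q‖ < 1) :
    (∏' i : ℕ, (1 + q ^ (i + 1))) =
      ∑' m : ℕ,
        ((∏ i ∈ Finset.range m, (1 + q ^ (i + 1))) /
            (∏ i ∈ Finset.range m, (1 - q ^ (i + 1)))) *
          q ^ (m * (3 * m + 1) / 2) * (1 + q ^ (2 * m + 1)) := by
  have hq' : ‖q‖ < 1 := hq
  have hconst : Filter.Tendsto
      (fun N => (∏ i ∈ Finset.range N, (1 + q ^ (i + 1))) * ∑' m, SylvesterAux.c q (q ^ N) m)
      Filter.atTop (nhds (∑' m, SylvesterAux.c q 1 m)) := by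
    have h0 : Filter.Tendsto (fun _ : ℕ => (∑' m, SylvesterAux.c q 1 m)) Filter.atTop
        (nhds (∑' m, SylvesterAux.c q 1 m)) := tendsto_const_nhds
    exact h0.congr fun N => SylvesterAux.iter hq' N
  have hlim : Filter.Tendsto
      (fun N => (∏ i ∈ Finset.range N, (1 + q ^ (i + 1))) * ∑' m, SylvesterAux.c q (q ^ N) m)
      Filter.atTop (nhds ((∏' i : ℕ, (1 + q ^ (i + 1))) * 1)) :=
    ((SylvesterAux.multipliable_aux hq').hasProd.tendsto_prod_nat).mul
      (SylvesterAux.tendsto_F hq')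
  have hmain : (∑' m, SylvesterAux.c q 1 m) = (∏' i : ℕ, (1 + q ^ (i + 1))) * 1 :=
    tendsto_nhds_unique hconst hlim
  rw [mul_one] at hmain
  rw [← hmain]
  refine tsum_congr fun m => ?_
  simp [SylvesterAux.c, SylvesterAux.e]
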